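/- Let S be a metric space, A a nonempty finite type, and γ ∈ [0,1). Let R : S → A → ℝ be bounded with s ↦ R(s,a) continuous for every a, and let P : S → A → ProbabilityMeasure(S) be such that for every a the map s ↦ P(s,a) is continuous with respect to the topology of weak convergence of probability measures. For a bounded continuous function f : S × A → ℝ, define (Tf)(s,a) = R(s,a) + γ·∫ (max_{a' ∈ A} f(s',a')) dP(s,a)(s'). Then: (i) Tf is bounded and continuous (A given the discrete topology); and (ii) for all bounded continuous f, g : S × A → ℝ, sup_{(s,a)} |Tf(s,a) − Tg(s,a)| ≤ γ · sup_{(s,a)} |f(s,a) − g(s,a)|; i.e., T is a γ-contraction in the supremum norm on bounded continuous functions. -/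
import Mathlib


open MeasureTheory BoundedContinuousFunction
open scoped BoundedContinuousFunction

/-- The Bellman optimality operator of the MDP `(S, A, R, P, γ)`:
`(Tf)(s,a) = R(s,a) + γ·∫ (max_{a'} f(s',a')) dP(s,a)(s')`. -/
noncomputable def bellmanT {S : Type*} [MeasurableSpace S]
    {A : Type*} [Fintype A] [Nonempty A]
    (R : S → A → ℝ) (P : S → A → ProbabilityMeasure S) (γ : ℝ)
    (f : S × A → ℝ) : S × A → ℝ :=
  fun p => R p.1 p.2 +
    γ * ∫ s', (Finset.univ.sup' Finset.univ_nonempty fun a' => f (s', a'))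
      ∂(P p.1 p.2 : Measure S)


lemma cont_of_discrete' {S A X : Type*} [TopologicalSpace S] [TopologicalSpace A]
    [DiscreteTopology A] [TopologicalSpace X] {F : S × A → X}
    (h : ∀ a, Continuous fun s => F (s, a)) : Continuous F := by
  rw [continuous_iff_continuousAt]
  rintro ⟨s, a⟩
  rw [ContinuousAt, nhds_prod_eq, nhds_discrete A, Filter.prod_pure, Filter.tendsto_map'_iff]
  exact (h a).tendsto s

lemma sup'_cont {S A : Type*} [TopologicalSpace S] [TopologicalSpace A] [Fintype A] [Nonempty A]
    {f : S × A → ℝ} (hf : Continuous f) :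
    Continuous fun s => Finset.univ.sup' Finset.univ_nonempty fun a' => f (s, a') := by
  rw [continuous_iff_continuousAt]
  intro s
  exact Filter.Tendsto.finset_sup'_nhds_apply _ fun i _ =>
    ((hf.comp (Continuous.prodMk_left i)).tendsto s)

lemma sup'_bdd {S A : Type*} [TopologicalSpace A] [Fintype A] [Nonempty A]
    {f : S × A → ℝ} {C : ℝ} (hC : ∀ p, |f p| ≤ C) (s : S) :
    ‖Finset.univ.sup' Finset.univ_nonempty fun a' => f (s, a')‖ ≤ C := by
  rw [Real.norm_eq_abs, abs_le]
  constructor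
  · calc -C ≤ f (s, Classical.arbitrary A) := (abs_le.1 (hC _)).1
      _ ≤ _ := Finset.le_sup' (fun a' => f (s, a')) (Finset.mem_univ _)
  · exact Finset.sup'_le _ _ fun a _ => (abs_le.1 (hC _)).2

noncomputable def maxBCF {S A : Type*} [TopologicalSpace S] [TopologicalSpace A]
    [Fintype A] [Nonempty A] (f : S × A → ℝ) (hf : Continuous f) (C : ℝ)
    (hC : ∀ p, |f p| ≤ C) : S →ᵇ ℝ :=
  BoundedContinuousFunction.ofNormedAddCommGroup _ (sup'_cont hf) C (sup'_bdd hC)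


theorem stmt11 {S : Type*} [MetricSpace S] [MeasurableSpace S] [BorelSpace S]
    {A : Type*} [Fintype A] [Nonempty A] [TopologicalSpace A] [DiscreteTopology A]
    (γ : ℝ) (hγ0 : 0 ≤ γ) (hγ1 : γ < 1)
    (R : S → A → ℝ) (CR : ℝ) (hRb : ∀ s a, |R s a| ≤ CR)
    (hRc : ∀ a : A, Continuous fun s => R s a)
    (P : S → A → ProbabilityMeasure S)
    (hPc : ∀ a : A, Continuous fun s => P s a) :
    (∀ f : S × A → ℝ, Continuous f → (∃ C, ∀ p, |f p| ≤ C) →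
      (∃ C, ∀ p, |bellmanT R P γ f p| ≤ C) ∧ Continuous (bellmanT R P γ f)) ∧
    (∀ f g : S × A → ℝ, Continuous f → (∃ C, ∀ p, |f p| ≤ C) →
      Continuous g → (∃ C, ∀ p, |g p| ≤ C) →
      (⨆ p : S × A, |bellmanT R P γ f p - bellmanT R P γ g p|) ≤
        γ * ⨆ p : S × A, |f p - g p|) := by
  have hint : ∀ (F : S →ᵇ ℝ) (C : ℝ), (∀ s, ‖F s‖ ≤ C) → ∀ s a,
      ‖∫ s', F s' ∂(P s a : Measure S)‖ ≤ C := by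
    intro F C hC s a
    calc ‖∫ s', F s' ∂(P s a : Measure S)‖
        ≤ C * ((P s a : Measure S) Set.univ).toReal :=
          norm_integral_le_of_norm_le_const (Filter.Eventually.of_forall hC)
      _ = C := by simp
  constructor
  · rintro f hf ⟨C, hC⟩
    set F := maxBCF f hf C hC with hF
    have hFs : ∀ s, F s = Finset.univ.sup' Finset.univ_nonempty fun a' => f (s, a') :=
      fun s => rfl
    have hFb : ∀ s, ‖F s‖ ≤ C := fun s => sup'_bdd hC s
    have heq : bellmanT R P γ f =
        fun p => R p.1 p.2 + γ * ∫ s', F s' ∂(P p.1 p.2 : Measure S) := rfl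
    constructor
    · refine ⟨CR + γ * C, fun p => ?_⟩
      rw [heq]
      calc |R p.1 p.2 + γ * ∫ s', F s' ∂(P p.1 p.2 : Measure S)|
          ≤ |R p.1 p.2| + |γ * ∫ s', F s' ∂(P p.1 p.2 : Measure S)| := abs_add_le _ _
        _ ≤ CR + γ * C := by
            refine add_le_add (hRb _ _) ?_
            rw [abs_mul, abs_of_nonneg hγ0]
            exact mul_le_mul_of_nonneg_left (hint F C hFb p.1 p.2) hγ0
    · rw [heq]
      refine cont_of_discrete' fun a => ?_
      exact (hRc a).add (continuous_const.mul
        ((ProbabilityMeasure.continuous_integral_boundedContinuousFunction F).comp (hPc a)))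
  · rintro f g hf ⟨Cf, hCf⟩ hg ⟨Cg, hCg⟩
    rcases isEmpty_or_nonempty S with hS | hS
    · have h1 : (⨆ p : S × A, |bellmanT R P γ f p - bellmanT R P γ g p|) = 0 :=
        Real.iSup_of_isEmpty _
      have h2 : (⨆ p : S × A, |f p - g p|) = 0 := Real.iSup_of_isEmpty _
      rw [h1, h2, mul_zero]
    · set M := ⨆ p : S × A, |f p - g p| with hM
      have hbdd : BddAbove (Set.range fun p : S × A => |f p - g p|) := by
        refine ⟨Cf + Cg, ?_⟩
        rintro _ ⟨p, rfl⟩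
        calc |f p - g p| ≤ |f p| + |g p| := abs_sub _ _
          _ ≤ Cf + Cg := add_le_add (hCf p) (hCg p)
      have hle : ∀ p : S × A, |f p - g p| ≤ M := fun p => le_ciSup hbdd p
      set Ff := maxBCF f hf Cf hCf with hFf
      set Fg := maxBCF g hg Cg hCg with hFg
      have hpt : ∀ s, ‖Ff s - Fg s‖ ≤ M := by
        intro s
        rw [Real.norm_eq_abs, abs_le]
        have h1 : ∀ (u v : S × A → ℝ), (∀ p, |u p - v p| ≤ M) →
            (Finset.univ.sup' Finset.univ_nonempty fun a' => u (s, a')) ≤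
            (Finset.univ.sup' Finset.univ_nonempty fun a' => v (s, a')) + M := by
          intro u v huv
          refine Finset.sup'_le _ _ fun a _ => ?_
          calc u (s, a) ≤ v (s, a) + M := by
                have := (abs_le.1 (huv (s, a))).2
                linarith
            _ ≤ _ + M := by
                gcongr
                exact Finset.le_sup' (fun a' => v (s, a')) (Finset.mem_univ a)
        constructor
        · have := h1 g f fun p => by rw [abs_sub_comm]; exact hle p
          change -M ≤ (Finset.univ.sup' Finset.univ_nonempty fun a' => f (s, a')) -
            (Finset.univ.sup' Finset.univ_nonempty fun a' => g (s, a'))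
          linarith
        · have := h1 f g hle
          change (Finset.univ.sup' Finset.univ_nonempty fun a' => f (s, a')) -
            (Finset.univ.sup' Finset.univ_nonempty fun a' => g (s, a')) ≤ M
          linarith
      refine ciSup_le fun p => ?_
      have e1 : bellmanT R P γ f p =
          R p.1 p.2 + γ * ∫ s', Ff s' ∂(P p.1 p.2 : Measure S) := rfl
      have e2 : bellmanT R P γ g p =
          R p.1 p.2 + γ * ∫ s', Fg s' ∂(P p.1 p.2 : Measure S) := rfl
      have heq : bellmanT R P γ f p - bellmanT R P γ g p =
          γ * ((∫ s', Ff s' ∂(P p.1 p.2 : Measure S)) -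
               (∫ s', Fg s' ∂(P p.1 p.2 : Measure S))) := by
        rw [e1, e2]; ring
      rw [heq, abs_mul, abs_of_nonneg hγ0]
      refine mul_le_mul_of_nonneg_left ?_ hγ0
      rw [← integral_sub (Ff.integrable _) (Fg.integrable _)]
      have := hint (Ff - Fg) M (fun s => by simpa using hpt s) p.1 p.2
      simpa using this
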